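/- The number of diagonal pair partitions of [2n] ⊔ [2̄n] equals the Euler number E_{2n}: #P₂^⊗(2n) = E_{2n}. Equivalently, the number of pairs (π, σ) of pair partitions of {1,...,2n} such that, when the blocks of each are ordered by their minimal elements, the i-th block of π and the i-th block of σ have the same minimum for every i, equals E_{2n}. -/

import Mathlib

set_option linter.unusedSectionVars false

open Real

namespace DiagPP



/-- Weighted Motzkin-style path counts: `W m h` = weighted number of lattice paths of
length `m` from height `h` down to `0`, up steps weight 1, down steps from height `h`
weight `h²`. -/
def W : ℕ → ℕ → ℕ
  | 0, h => if h = 0 then 1 else 0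
  | m+1, h => W m (h+1) + h * h * W m (h-1)

/-- `F` is a fixed point free involution whose first `h` points ("pendings") are matched
to points `≥ h`. -/
def okF {N : ℕ} (h : ℕ) (F : Equiv.Perm (Fin N)) : Prop :=
  (∀ a, F (F a) = a) ∧ (∀ a, F a ≠ a) ∧ ∀ a : Fin N, (a : ℕ) < h → h ≤ (F a : ℕ)

/-- Pairs of such involutions with the same set of "openers" among the non-pending points. -/
def Ysub (N h : ℕ) : Type :=
  {p : Equiv.Perm (Fin N) × Equiv.Perm (Fin N) //
    okF h p.1 ∧ okF h p.2 ∧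
      ∀ a : Fin N, (h ≤ (a : ℕ) ∧ a < p.1 a) ↔ (h ≤ (a : ℕ) ∧ a < p.2 a)}

instance (N h : ℕ) : Finite (Ysub N h) := by unfold Ysub; infer_instance

lemma card_ysub_base (h : ℕ) : Nat.card (Ysub h h) = W 0 h := by
  rcases Nat.eq_zero_or_pos h with rfl | hpos
  · have : Unique (Ysub 0 0) := by
      refine ⟨⟨⟨(1, 1), ?_⟩⟩, ?_⟩
      · refine ⟨⟨fun a => a.elim0, fun a => a.elim0, fun a => a.elim0⟩,
          ⟨fun a => a.elim0, fun a => a.elim0, fun a => a.elim0⟩, fun a => a.elim0⟩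
      · rintro ⟨⟨F, G⟩, -⟩
        apply Subtype.ext
        have hF : F = 1 := Equiv.ext fun a => a.elim0
        have hG : G = 1 := Equiv.ext fun a => a.elim0
        simp [hF, hG]
    simp [Nat.card_unique, W]
  · have : IsEmpty (Ysub h h) := by
      constructor
      rintro ⟨⟨F, G⟩, hF, -, -⟩
      have h1 := hF.2.2 ⟨0, hpos⟩ hpos
      have h2 := (F ⟨0, hpos⟩).isLt
      omega
    rw [Nat.card_of_isEmpty, W]
    have : h ≠ 0 := by omega
    simp [this]








section opener

variable {N h : ℕ} (hN : h < N)

lemma okF_step {F : Equiv.Perm (Fin N)} (hF : okF h F) (hr : (⟨h, hN⟩ : Fin N) < F ⟨h, hN⟩) :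
    okF (h+1) F := by
  obtain ⟨h1, h2, h3⟩ := hF
  refine ⟨h1, h2, fun a ha => ?_⟩
  have hfa : h < (F ⟨h, hN⟩ : ℕ) := by simpa [Fin.lt_def] using hr
  rcases Nat.lt_or_ge (a : ℕ) h with hah | hah
  · have hge := h3 a hah
    rcases Nat.eq_or_lt_of_le hge with heq | hlt
    · exfalso
      have e1 : F a = ⟨h, hN⟩ := Fin.ext heq.symm
      have e2 : a = F ⟨h, hN⟩ := by rw [← e1, h1]
      have : (a : ℕ) > h := by rw [e2]; exact hfa
      omega
    · omega
  · have e : a = (⟨h, hN⟩ : Fin N) := Fin.ext (show (a : ℕ) = h by omega)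
    subst e
    simpa using hfa

lemma okF_unstep {F : Equiv.Perm (Fin N)} (hF : okF (h+1) F) : okF h F ∧
    (⟨h, hN⟩ : Fin N) < F ⟨h, hN⟩ := by
  obtain ⟨h1, h2, h3⟩ := hF
  have hr : h + 1 ≤ (F ⟨h, hN⟩ : ℕ) := h3 _ (by simp)
  refine ⟨⟨h1, h2, fun a ha => le_trans (by omega) (h3 a (by omega))⟩, ?_⟩
  simp only [Fin.lt_def]
  omega

lemma cond_step (F G : Equiv.Perm (Fin N)) :
    ((okF h F ∧ okF h G ∧
        ∀ a : Fin N, (h ≤ (a : ℕ) ∧ a < F a) ↔ (h ≤ (a : ℕ) ∧ a < G a)) ∧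
      (⟨h, hN⟩ : Fin N) < F ⟨h, hN⟩)
    ↔ (okF (h+1) F ∧ okF (h+1) G ∧
        ∀ a : Fin N, (h+1 ≤ (a : ℕ) ∧ a < F a) ↔ (h+1 ≤ (a : ℕ) ∧ a < G a)) := by
  constructor
  · rintro ⟨⟨hF, hG, hc⟩, hr⟩
    have hGr : (⟨h, hN⟩ : Fin N) < G ⟨h, hN⟩ :=
      ((hc _).mp ⟨by simp, hr⟩).2
    refine ⟨okF_step hN hF hr, okF_step hN hG hGr, fun a => ?_⟩
    have := hc a
    simp only [Fin.lt_def] at this ⊢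
    omega
  · rintro ⟨hF, hG, hc⟩
    obtain ⟨hF', hr⟩ := okF_unstep hN hF
    obtain ⟨hG', hGr⟩ := okF_unstep hN hG
    refine ⟨⟨hF', hG', fun a => ?_⟩, hr⟩
    rcases Nat.lt_trichotomy (a : ℕ) h with ha | ha | ha
    · constructor <;> (rintro ⟨ha', -⟩; omega)
    · have : a = (⟨h, hN⟩ : Fin N) := Fin.ext (show (a : ℕ) = h by omega)
      subst this
      simp only [Fin.lt_def] at hr hGr ⊢
      omega
    · have := hc a
      simp only [Fin.lt_def] at this ⊢
      omega

lemma card_opener :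
    Nat.card {x : Ysub N h // (⟨h, hN⟩ : Fin N) < x.1.1 ⟨h, hN⟩} = Nat.card (Ysub N (h+1)) := by
  apply Nat.card_congr
  unfold Ysub
  exact (Equiv.subtypeSubtypeEquivSubtypeInter
      (fun y : Equiv.Perm (Fin N) × Equiv.Perm (Fin N) => okF h y.1 ∧ okF h y.2 ∧
        ∀ a : Fin N, (h ≤ (a : ℕ) ∧ a < y.1 a) ↔ (h ≤ (a : ℕ) ∧ a < y.2 a))
      (fun y => (⟨h, hN⟩ : Fin N) < y.1 ⟨h, hN⟩)).trans
    (Equiv.subtypeEquivRight (fun y => cond_step hN y.1 y.2))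

end opener







def invo {α : Type*} (f : α → α) (hf : ∀ a, f (f a) = a) : Equiv.Perm α := ⟨f, f, hf, hf⟩

@[simp] lemma invo_apply {α : Type*} (f : α → α) (hf) (a : α) : invo f hf a = f a := rfl

section closer

variable {k m : ℕ}

def embv (k i b : ℕ) : ℕ := if b < i then b else if b < k then b + 1 else b + 2

def shrv (k i a : ℕ) : ℕ := if a < i then a else if a ≤ k then a - 1 else a - 2

def rr (k m : ℕ) : Fin (k+m+2) := ⟨k+1, by omega⟩

def cI (i : Fin (k+1)) : Fin (k+m+2) := ⟨(i : ℕ), by have := i.isLt; omega⟩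

def emb (i : Fin (k+1)) (b : Fin (k+m)) : Fin (k+m+2) :=
  ⟨embv k i b, by have hi := i.isLt; have hb := b.isLt; unfold embv; split_ifs <;> omega⟩

def shr (i : Fin (k+1)) (a : Fin (k+m+2)) (ha : (a : ℕ) ≠ (i : ℕ) ∧ (a : ℕ) ≠ k+1) :
    Fin (k+m) :=
  ⟨shrv k i a, by
    have hi := i.isLt; have hb := a.isLt; unfold shrv; split_ifs <;> omega⟩

lemma emb_ne (i : Fin (k+1)) (b : Fin (k+m)) :
    ((emb i b : Fin (k+m+2)) : ℕ) ≠ (i : ℕ) ∧ ((emb i b : Fin (k+m+2)) : ℕ) ≠ k+1 := by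
  have hi := i.isLt; have hb := b.isLt
  show embv k i b ≠ _ ∧ embv k i b ≠ _
  unfold embv; split_ifs <;> omega

lemma shr_emb (i : Fin (k+1)) (b : Fin (k+m)) (ha) : shr i (emb i b) ha = b := by
  have hi := i.isLt; have hb := b.isLt
  apply Fin.ext
  show shrv k i (embv k i b) = (b : ℕ)
  unfold embv shrv; split_ifs <;> omega

lemma emb_shr (i : Fin (k+1)) (a : Fin (k+m+2)) (ha) : emb i (shr i a ha) = a := by
  have hi := i.isLt; have hb := a.isLt
  apply Fin.ext
  show embv k i (shrv k i a) = (a : ℕ)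
  obtain ⟨h1, h2⟩ := ha
  unfold embv shrv; split_ifs <;> omega

lemma shr_congr (i : Fin (k+1)) {a a' : Fin (k+m+2)} (h : a = a') (ha ha') :
    shr i a ha = shr i a' ha' := by subst h; rfl

lemma emb_pend (i : Fin (k+1)) (b : Fin (k+m)) (hb : (b : ℕ) < k) :
    ((emb i b : Fin (k+m+2)) : ℕ) < k + 1 := by
  have hi := i.isLt
  show embv k i b < k + 1
  unfold embv; split_ifs <;> omega

lemma emb_real (i : Fin (k+1)) (b : Fin (k+m)) (hb : k ≤ (b : ℕ)) :
    ((emb i b : Fin (k+m+2)) : ℕ) = (b : ℕ) + 2 := by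
  have hi := i.isLt
  show embv k i b = (b : ℕ) + 2
  unfold embv; split_ifs <;> omega

lemma emb_injective (i : Fin (k+1)) : Function.Injective (emb (m := m) i) := by
  intro b b' h
  have hv := congrArg Fin.val h
  have hb := b.isLt; have hb' := b'.isLt; have hi := i.isLt
  apply Fin.ext
  show (b : ℕ) = (b' : ℕ)
  revert hv
  show embv k i b = embv k i b' → _
  unfold embv; split_ifs <;> omega

variable (i : Fin (k+1)) (F : Equiv.Perm (Fin (k+m+2)))

section del
variable (hinv : ∀ a, F (F a) = a) (hFr : ((F (rr k m)) : ℕ) = (i : ℕ))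

include hinv hFr

lemma F_rr : F (rr k m) = cI i := Fin.ext hFr

lemma F_cI : F (cI i) = rr k m := by
  have h1 : F (rr k m) = cI i := Fin.ext hFr
  rw [← h1, hinv]

lemma del_aux (b : Fin (k+m)) :
    ((F (emb i b)) : ℕ) ≠ (i : ℕ) ∧ ((F (emb i b)) : ℕ) ≠ k+1 := by
  constructor
  · intro hcon
    have : F (emb i b) = cI i := Fin.ext hcon
    have h2 : emb i b = F (cI i) := by rw [← this, hinv]
    rw [F_cI i F hinv hFr] at h2
    exact (emb_ne i b).2 (by rw [h2]; rfl)
  · intro hcon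
    have : F (emb i b) = rr k m := Fin.ext hcon
    have h2 : emb i b = F (rr k m) := by rw [← this, hinv]
    rw [F_rr i F hinv hFr] at h2
    exact (emb_ne i b).1 (by rw [h2]; rfl)

def delFun (b : Fin (k+m)) : Fin (k+m) :=
  shr i (F (emb i b)) (del_aux i F hinv hFr b)

lemma delFun_invol (b : Fin (k+m)) :
    delFun i F hinv hFr (delFun i F hinv hFr b) = b := by
  unfold delFun
  have e : emb i (shr i (F (emb i b)) (del_aux i F hinv hFr b)) = F (emb i b) := emb_shr _ _ _
  refine (shr_congr i (by rw [e, hinv]) _ _).trans (shr_emb i b ?_)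
  exact emb_ne i b

def delPerm : Equiv.Perm (Fin (k+m)) :=
  invo (delFun i F hinv hFr) (delFun_invol i F hinv hFr)

end del

def insFun (F' : Equiv.Perm (Fin (k+m))) (a : Fin (k+m+2)) : Fin (k+m+2) :=
  if h1 : (a : ℕ) = (i : ℕ) then rr k m
  else if h2 : (a : ℕ) = k+1 then cI i
  else emb i (F' (shr i a ⟨h1, h2⟩))

variable (F' : Equiv.Perm (Fin (k+m)))

lemma insFun_rr : insFun i F' (rr k m) = cI i := by
  have hi := i.isLt
  have h2 : ((rr k m : Fin (k+m+2)) : ℕ) = k+1 := rfl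
  unfold insFun
  rw [dif_neg (by show k+1 ≠ (i:ℕ); omega), dif_pos h2]

lemma insFun_cI : insFun i F' (cI i) = rr k m := by
  have h1 : ((cI i : Fin (k+m+2)) : ℕ) = (i : ℕ) := rfl
  unfold insFun
  rw [dif_pos h1]

lemma insFun_emb (b : Fin (k+m)) : insFun i F' (emb i b) = emb i (F' b) := by
  unfold insFun
  rw [dif_neg (emb_ne i b).1, dif_neg (emb_ne i b).2]
  congr 1
  congr 1
  exact shr_emb i b _

variable (hF' : ∀ b, F' (F' b) = b)
include hF'

lemma insFun_invol (a : Fin (k+m+2)) : insFun i F' (insFun i F' a) = a := by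
  by_cases h1 : (a : ℕ) = (i : ℕ)
  · have ha : a = cI i := Fin.ext h1
    rw [ha, insFun_cI, insFun_rr]
  · by_cases h2 : (a : ℕ) = k+1
    · have ha : a = rr k m := Fin.ext h2
      rw [ha, insFun_rr, insFun_cI]
    · have ha : a = emb i (shr i a ⟨h1, h2⟩) := (emb_shr i a _).symm
      conv_lhs => rw [ha, insFun_emb, insFun_emb, hF']
      exact (emb_shr i a _)

def insPerm : Equiv.Perm (Fin (k+m+2)) :=
  invo (insFun i F') (insFun_invol i F' hF')

omit hF' in
lemma ins_del (hinv : ∀ a, F (F a) = a) (hFr : ((F (rr k m)) : ℕ) = (i : ℕ)) :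
    insPerm i (delPerm i F hinv hFr) (delFun_invol i F hinv hFr) = F := by
  apply Equiv.ext
  intro a
  show insFun i (delPerm i F hinv hFr) a = F a
  by_cases h1 : (a : ℕ) = (i : ℕ)
  · have ha : a = cI i := Fin.ext h1
    rw [ha, insFun_cI, F_cI i F hinv hFr]
  · by_cases h2 : (a : ℕ) = k+1
    · have ha : a = rr k m := Fin.ext h2
      rw [ha, insFun_rr, F_rr i F hinv hFr]
    · have ha : a = emb i (shr i a ⟨h1, h2⟩) := (emb_shr i a _).symm
      conv_lhs => rw [ha, insFun_emb]
      show emb i (delFun i F hinv hFr (shr i a ⟨h1, h2⟩)) = F a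
      unfold delFun
      rw [emb_shr]
      congr 1
      exact (emb_shr i a _)

lemma ins_r_val : ((insPerm i F' hF' (rr k m)) : ℕ) = (i : ℕ) := by
  show ((insFun i F' (rr k m)) : ℕ) = (i : ℕ)
  rw [insFun_rr]; rfl

lemma del_ins :
    delPerm i (insPerm i F' hF') (insFun_invol i F' hF') (ins_r_val i F' hF') = F' := by
  apply Equiv.ext
  intro b
  show delFun i (insPerm i F' hF') (insFun_invol i F' hF') (ins_r_val i F' hF') b = F' b
  unfold delFun
  refine (shr_congr i (show insPerm i F' hF' (emb i b) = emb i (F' b) from insFun_emb i F' b) _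
    ((emb_ne i (F' b)))).trans (shr_emb i (F' b) _)


end closer

section transfer

variable {k m : ℕ}

lemma del_ok (i : Fin (k+1)) (F : Equiv.Perm (Fin (k+m+2))) (hinv : ∀ a, F (F a) = a) (hFr : ((F (rr k m)) : ℕ) = (i : ℕ))
    (hok : okF (k+1) F) : okF k (delPerm i F hinv hFr) := by
  obtain ⟨h1, h2, h3⟩ := hok
  refine ⟨delFun_invol i F hinv hFr, ?_, ?_⟩
  · intro b hcon
    apply h2 (emb i b)
    have h4 : emb i (delFun i F hinv hFr b) = emb i b := by
      simp only [delPerm, invo_apply] at hcon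
      rw [hcon]
    rw [delFun, emb_shr] at h4
    exact h4
  · intro b hb
    show k ≤ shrv k i (F (emb i b))
    have hpend : ((emb i b : Fin (k+m+2)) : ℕ) < k + 1 := emb_pend i b hb
    have hge : k + 1 ≤ (F (emb i b) : ℕ) := h3 _ hpend
    have hne := del_aux i F hinv hFr b
    have hi := i.isLt
    unfold shrv; split_ifs <;> omega

lemma ins_ok (i : Fin (k+1)) (F' : Equiv.Perm (Fin (k+m))) (hF' : ∀ b, F' (F' b) = b) (hok : okF k F') :
    okF (k+1) (insPerm i F' hF') := by
  obtain ⟨h1, h2, h3⟩ := hok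
  have hi := i.isLt
  refine ⟨insFun_invol i F' hF', ?_, ?_⟩
  · intro a hcon
    show False
    by_cases ha1 : (a : ℕ) = (i : ℕ)
    · have : a = cI i := Fin.ext ha1
      rw [this] at hcon
      simp only [insPerm, invo_apply] at hcon
      rw [insFun_cI] at hcon
      have := congrArg Fin.val hcon
      simp only [rr, cI] at this
      omega
    · by_cases ha2 : (a : ℕ) = k+1
      · have : a = rr k m := Fin.ext ha2
        rw [this] at hcon
        simp only [insPerm, invo_apply] at hcon
        rw [insFun_rr] at hcon
        have := congrArg Fin.val hcon
        simp only [rr, cI] at this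
        omega
      · have ha : a = emb i (shr i a ⟨ha1, ha2⟩) := (emb_shr i a _).symm
        rw [ha] at hcon
        simp only [insPerm, invo_apply] at hcon
        rw [insFun_emb] at hcon
        exact h2 (shr i a ⟨ha1, ha2⟩) (emb_injective i hcon)
  · intro a ha
    by_cases ha1 : (a : ℕ) = (i : ℕ)
    · have : a = cI i := Fin.ext ha1
      rw [this]
      simp only [insPerm, invo_apply]
      rw [insFun_cI]
      show k + 1 ≤ k + 1
      omega
    · have ha2 : (a : ℕ) ≠ k+1 := by omega
      have he : a = emb i (shr i a ⟨ha1, ha2⟩) := (emb_shr i a _).symm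
      rw [he]
      simp only [insPerm, invo_apply]
      rw [insFun_emb]
      have hs : (shr i a ⟨ha1, ha2⟩ : ℕ) < k := by
        show shrv k i a < k
        unfold shrv; split_ifs <;> omega
      have := h3 _ hs
      show k + 1 ≤ embv k i ((F' (shr i a ⟨ha1, ha2⟩)) : ℕ)
      unfold embv; split_ifs <;> omega

lemma del_opener (i : Fin (k+1)) (F : Equiv.Perm (Fin (k+m+2))) (hinv : ∀ a, F (F a) = a) (hFr : ((F (rr k m)) : ℕ) = (i : ℕ))
    (b : Fin (k+m)) (hb2 : (b : ℕ) + 2 < k+m+2) :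
    ((k ≤ (b : ℕ) ∧ b < delPerm i F hinv hFr b) ↔
      (k+1 ≤ ((⟨(b:ℕ)+2, hb2⟩ : Fin (k+m+2)) : ℕ) ∧
        (⟨(b:ℕ)+2, hb2⟩ : Fin (k+m+2)) < F ⟨(b:ℕ)+2, hb2⟩)) := by
  have hi := i.isLt
  rcases Nat.lt_or_ge (b : ℕ) k with hb | hb
  · constructor
    · rintro ⟨hc, -⟩; omega
    · rintro ⟨hge, hc⟩
      exfalso
      have hv : ((⟨(b:ℕ)+2, hb2⟩ : Fin (k+m+2)) : ℕ) = (b:ℕ)+2 := rfl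
      rw [hv] at hge
      have hx2 : (b:ℕ)+2 = k+1 := by omega
      have he : (⟨(b:ℕ)+2, hb2⟩ : Fin (k+m+2)) = rr k m := Fin.ext hx2
      rw [he] at hc
      simp only [Fin.lt_def] at hc
      rw [hFr] at hc
      have hrv : ((rr k m : Fin (k+m+2)) : ℕ) = k+1 := rfl
      rw [hrv] at hc
      omega
  · -- real case
    have hemb : emb i b = (⟨(b:ℕ)+2, hb2⟩ : Fin (k+m+2)) := Fin.ext (emb_real i b hb)
    have hne := del_aux i F hinv hFr b
    rw [← hemb]
    constructor
    · rintro ⟨-, hc⟩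
      refine ⟨by rw [hemb]; show k+1 ≤ (b:ℕ)+2; omega, ?_⟩
      have hcv : (b : ℕ) < shrv k i ((F (emb i b)) : ℕ) := hc
      simp only [Fin.lt_def]
      have hlt := (F (emb i b)).isLt
      rw [emb_real i b hb]
      unfold shrv at hcv; split_ifs at hcv <;> omega
    · rintro ⟨-, hc⟩
      refine ⟨hb, ?_⟩
      simp only [Fin.lt_def] at hc
      rw [emb_real i b hb] at hc
      show (b : ℕ) < shrv k i ((F (emb i b)) : ℕ)
      unfold shrv; split_ifs <;> omega

end transfer

section assemble2

variable {k m : ℕ}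

lemma closer_lt (F : Equiv.Perm (Fin (k+m+2))) (hok : okF (k+1) F)
    (hni : ¬ (rr k m < F (rr k m))) : ((F (rr k m)) : ℕ) < k+1 := by
  have h2 := hok.2.1 (rr k m)
  have hv : ((rr k m : Fin (k+m+2)) : ℕ) = k+1 := rfl
  have hne : ((F (rr k m)) : ℕ) ≠ k+1 := fun hcon => h2 (Fin.ext (hcon.trans hv.symm))
  simp only [Fin.lt_def, hv] at hni
  omega

lemma closer_G (F G : Equiv.Perm (Fin (k+m+2)))
    (hc : ∀ a : Fin (k+m+2), ((k+1 ≤ (a:ℕ) ∧ a < F a) ↔ (k+1 ≤ (a:ℕ) ∧ a < G a)))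
    (hni : ¬ (rr k m < F (rr k m))) : ¬ (rr k m < G (rr k m)) := by
  intro hcon
  have hv : ((rr k m : Fin (k+m+2)) : ℕ) = k+1 := rfl
  exact hni ((hc (rr k m)).mpr ⟨le_of_eq hv.symm, hcon⟩).2

lemma ins_not_lt (i : Fin (k+1)) (F' : Equiv.Perm (Fin (k+m))) (hF' : ∀ b, F' (F' b) = b) :
    ¬ (rr k m < insPerm i F' hF' (rr k m)) := by
  have hi := i.isLt
  simp only [insPerm, invo_apply, insFun_rr]
  simp only [Fin.lt_def]
  have h1 : ((rr k m : Fin (k+m+2)) : ℕ) = k+1 := rfl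
  have h2 : ((cI i : Fin (k+m+2)) : ℕ) = (i : ℕ) := rfl
  omega

lemma big_coupling (i j : Fin (k+1)) (F' G' : Equiv.Perm (Fin (k+m)))
    (hF' : ∀ b, F' (F' b) = b) (hG' : ∀ b, G' (G' b) = b)
    (hc : ∀ b : Fin (k+m), (k ≤ (b:ℕ) ∧ b < F' b) ↔ (k ≤ (b:ℕ) ∧ b < G' b)) :
    ∀ a : Fin (k+m+2), (k+1 ≤ (a:ℕ) ∧ a < insPerm i F' hF' a) ↔
      (k+1 ≤ (a:ℕ) ∧ a < insPerm j G' hG' a) := by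
  intro a
  by_cases h1 : (a:ℕ) < k+1
  · constructor <;> (rintro ⟨hx, -⟩; omega)
  · by_cases h2 : (a:ℕ) = k+1
    · have ha : a = rr k m := Fin.ext h2
      subst ha
      constructor <;> (rintro ⟨-, hlt⟩; exact absurd hlt (ins_not_lt _ _ _))
    · set b : Fin (k+m) := ⟨(a:ℕ)-2, by have := a.isLt; omega⟩ with hb
      have hb2 : ((b:ℕ))+2 < k+m+2 := by have := a.isLt; show (a:ℕ)-2+2 < k+m+2; omega
      have ha : (⟨(b:ℕ)+2, hb2⟩ : Fin (k+m+2)) = a := Fin.ext (by show (a:ℕ)-2+2 = (a:ℕ); omega)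
      have h3 := del_opener i (insPerm i F' hF') (insFun_invol i F' hF') (ins_r_val i F' hF') b hb2
      rw [del_ins i F' hF'] at h3
      have h4 := del_opener j (insPerm j G' hG') (insFun_invol j G' hG') (ins_r_val j G' hG') b hb2
      rw [del_ins j G' hG'] at h4
      rw [ha] at h3 h4
      exact h3.symm.trans ((hc b).trans h4)

set_option maxHeartbeats 2000000 in
lemma del_ins' (i i₀ : Fin (k+1)) (F' : Equiv.Perm (Fin (k+m))) (hF' : ∀ b, F' (F' b) = b)
    (h : i₀ = i) (hinv : ∀ a, insPerm i F' hF' (insPerm i F' hF' a) = a)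
    (hFr : ((insPerm i F' hF' (rr k m)) : ℕ) = (i₀ : ℕ)) :
    delPerm i₀ (insPerm i F' hF') hinv hFr = F' := by
  subst h
  exact del_ins i₀ F' hF'

def closerEquiv :
    {x : Ysub (k+m+2) (k+1) // ¬ (rr k m < x.1.1 (rr k m))}
      ≃ (Fin (k+1) × Fin (k+1)) × Ysub (k+m) k where
  toFun x :=
    have hF : okF (k+1) x.1.1.1 := x.1.2.1
    have hG : okF (k+1) x.1.1.2 := x.1.2.2.1
    have hc := x.1.2.2.2
    have hFlt : ((x.1.1.1 (rr k m)) : ℕ) < k+1 := closer_lt _ hF x.2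
    have hGlt : ((x.1.1.2 (rr k m)) : ℕ) < k+1 :=
      closer_lt _ hG (closer_G x.1.1.1 x.1.1.2 hc x.2)
    ((⟨_, hFlt⟩, ⟨_, hGlt⟩),
      ⟨(delPerm ⟨_, hFlt⟩ x.1.1.1 hF.1 rfl, delPerm ⟨_, hGlt⟩ x.1.1.2 hG.1 rfl),
        del_ok _ _ hF.1 rfl hF, del_ok _ _ hG.1 rfl hG,
        fun b => by
          have hb2 : ((b:ℕ))+2 < k+m+2 := by have := b.isLt; omega
          exact (del_opener _ x.1.1.1 hF.1 rfl b hb2).trans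
            ((hc _).trans (del_opener _ x.1.1.2 hG.1 rfl b hb2).symm)⟩)
  invFun q :=
    match q with
    | ((i, j), ⟨(F', G'), hF, hG, hc⟩) =>
      ⟨⟨(insPerm i F' hF.1, insPerm j G' hG.1),
        ins_ok i F' hF.1 hF, ins_ok j G' hG.1 hG,
        big_coupling i j F' G' hF.1 hG.1 hc⟩, ins_not_lt i F' hF.1⟩
  left_inv x := by
    apply Subtype.ext
    apply Subtype.ext
    apply Prod.ext_iff.mpr
    constructor
    · exact ins_del _ x.1.1.1 x.1.2.1.1 rfl
    · exact ins_del _ x.1.1.2 x.1.2.2.1.1 rfl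
  right_inv q := by
    obtain ⟨⟨i, j⟩, ⟨⟨F', G'⟩, hF, hG, hc⟩⟩ := q
    apply Prod.ext_iff.mpr
    constructor
    · apply Prod.ext_iff.mpr
      constructor
      · exact Fin.ext (ins_r_val i F' hF.1)
      · exact Fin.ext (ins_r_val j G' hG.1)
    · apply Subtype.ext
      apply Prod.ext_iff.mpr
      exact ⟨del_ins' i _ F' hF.1 (Fin.ext (ins_r_val i F' hF.1)) _ _,
        del_ins' j _ G' hG.1 (Fin.ext (ins_r_val j G' hG.1)) _ _⟩

lemma card_closer :
    Nat.card {x : Ysub (k+m+2) (k+1) // ¬ (rr k m < x.1.1 (rr k m))}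
      = (k+1) * (k+1) * Nat.card (Ysub (k+m) k) := by
  have : Finite (Ysub (k+m) k) := by unfold Ysub; infer_instance
  rw [Nat.card_congr (closerEquiv (k := k) (m := m)), Nat.card_prod, Nat.card_prod,
    Nat.card_eq_fintype_card (α := Fin (k+1)), Fintype.card_fin, mul_assoc]

end assemble2


lemma card_closer' (k m N : ℕ) (hNe : N = k+m+2) (hN : k+1 < N) :
    Nat.card {x : Ysub N (k+1) // ¬ ((⟨k+1, hN⟩ : Fin N) < x.1.1 ⟨k+1, hN⟩)}
      = (k+1) * (k+1) * Nat.card (Ysub (k+m) k) := by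
  subst hNe
  exact card_closer

lemma card_split {α : Type*} [Finite α] (P : α → Prop) :
    Nat.card α = Nat.card {x // P x} + Nat.card {x // ¬ P x} := by
  classical
  rw [← Nat.card_sum]
  exact Nat.card_congr (Equiv.sumCompl P).symm

lemma card_ysub (m h : ℕ) : Nat.card (Ysub (h+m) h) = W m h := by
  induction m generalizing h with
  | zero => exact card_ysub_base h
  | succ m IH =>
    have hN : h < h + (m+1) := by omega
    rw [card_split (P := fun x : Ysub (h+(m+1)) h =>
      (⟨h, hN⟩ : Fin (h+(m+1))) < x.1.1 ⟨h, hN⟩)]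
    have hop : Nat.card {x : Ysub (h+(m+1)) h //
        (⟨h, hN⟩ : Fin (h+(m+1))) < x.1.1 ⟨h, hN⟩} = W m (h+1) := by
      rw [card_opener hN]
      have e : h + (m+1) = (h+1) + m := by omega
      rw [e]
      exact IH (h+1)
    rw [hop]
    rcases Nat.eq_zero_or_pos h with rfl | hpos
    · have hemp : IsEmpty {x : Ysub (0+(m+1)) 0 //
          ¬ ((⟨0, hN⟩ : Fin (0+(m+1))) < x.1.1 ⟨0, hN⟩)} := by
        constructor
        rintro ⟨y, hni⟩
        apply hni
        have hne := y.2.1.2.1 ⟨0, hN⟩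
        simp only [Fin.lt_def]
        have hv : ((y.1.1 ⟨0, hN⟩ : Fin (0+(m+1))) : ℕ) ≠ 0 := by
          intro hc
          exact hne (Fin.ext (by simpa using hc))
        omega
      rw [Nat.card_of_isEmpty]
      simp [W]
    · obtain ⟨k, rfl⟩ : ∃ k, h = k+1 := ⟨h-1, by omega⟩
      rw [card_closer' k m (k+1+(m+1)) (by omega) hN, IH k]
      show W m (k+2) + (k+1) * (k+1) * W m k = W m (k+1+1) + (k+1) * (k+1) * W m (k+1-1)
      norm_num

lemma card_final (n : ℕ) :
    Nat.card {p : Equiv.Perm (Fin (2*n)) × Equiv.Perm (Fin (2*n)) //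
      (∀ a, p.1 (p.1 a) = a) ∧ (∀ a, p.1 a ≠ a) ∧ (∀ a, p.2 (p.2 a) = a) ∧ (∀ a, p.2 a ≠ a) ∧
      (∀ a, a < p.1 a ↔ a < p.2 a)} = W (2*n) 0 := by
  have h := card_ysub (2*n) 0
  rw [show 0 + 2*n = 2*n from by omega] at h
  rw [← h]
  apply Nat.card_congr
  unfold Ysub
  apply Equiv.subtypeEquivRight
  intro p
  unfold okF
  constructor
  · rintro ⟨h1, h2, h3, h4, h5⟩
    exact ⟨⟨h1, h2, fun a ha => absurd ha (by omega)⟩,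
      ⟨h3, h4, fun a ha => absurd ha (by omega)⟩,
      fun a => by simpa using h5 a⟩
  · rintro ⟨⟨h1, h2, -⟩, ⟨h3, h4, -⟩, h5⟩
    exact ⟨h1, h2, h3, h4, fun a => by simpa using h5 a⟩




noncomputable def g (h : ℕ) : ℝ → ℝ :=
  fun x => (h.factorial : ℝ) * Real.sin x ^ h / Real.cos x ^ (h+1)

def S : Set ℝ := Set.Ioo (-1 : ℝ) 1

lemma zero_mem_S : (0:ℝ) ∈ S := by constructor <;> norm_num

lemma cos_ne {x : ℝ} (hx : x ∈ S) : Real.cos x ≠ 0 := by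
  have hpi := Real.pi_gt_three
  obtain ⟨h1, h2⟩ := hx
  have : Real.cos x > 0 := Real.cos_pos_of_mem_Ioo ⟨by linarith, by linarith⟩
  linarith

lemma contg (h : ℕ) (n : ℕ∞) : ContDiffOn ℝ n (g h) S := by
  apply ContDiffOn.div
  · exact (contDiff_const.mul (Real.contDiff_sin.pow h)).contDiffOn
  · exact (Real.contDiff_cos.pow (h+1)).contDiffOn
  · intro x hx; exact pow_ne_zero _ (cos_ne hx)

lemma g_hasDeriv (h : ℕ) (x : ℝ) (hx : Real.cos x ≠ 0) :
    HasDerivAt (g h) (g (h+1) x + (h:ℝ) * (h:ℝ) * g (h-1) x) x := by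
  have hf : HasDerivAt (fun y => (h.factorial:ℝ) * Real.sin y ^ h)
      ((h.factorial:ℝ) * (((h:ℕ):ℝ) * Real.sin x ^ (h-1) * Real.cos x)) x :=
    ((Real.hasDerivAt_sin x).pow h).const_mul _
  have hg : HasDerivAt (fun y => Real.cos y ^ (h+1))
      ((((h+1:ℕ)):ℝ) * Real.cos x ^ (h+1-1) * (-Real.sin x)) x :=
    (Real.hasDerivAt_cos x).pow (h+1)
  have hden : Real.cos x ^ (h+1) ≠ 0 := pow_ne_zero _ hx
  have H := hf.div hg hden
  refine H.congr_deriv (Eq.symm ?_)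
  rcases h with _ | k
  · simp only [g, pow_zero, pow_one, Nat.factorial, Nat.cast_one, Nat.cast_zero,
      Nat.zero_sub, Nat.cast_ofNat]
    field_simp
    push_cast [Nat.succ_eq_add_one]; ring
  · have hk : (k+1) - 1 = k := rfl
    have hk2 : (k+1) + 1 - 1 = k + 1 := rfl
    simp only [g, hk, hk2]
    have hfact : ((k+1+1).factorial : ℝ) = (k+2) * ((k+1).factorial : ℝ) := by
      push_cast [Nat.factorial_succ]; ring
    have hfact2 : ((k+1).factorial : ℝ) = (k+1) * ((k).factorial : ℝ) := by
      push_cast [Nat.factorial_succ]; ring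
    rw [hfact, hfact2]
    field_simp
    push_cast; ring

lemma iterg (m : ℕ) : ∀ h : ℕ, iteratedDerivWithin m (g h) S 0 = W m h := by
  induction m with
  | zero =>
    intro h
    rw [iteratedDerivWithin_zero]
    rcases h with _ | h
    · simp [g, W]
    · simp [g, W]
  | succ m IH =>
    intro h
    have hU : UniqueDiffOn ℝ S := isOpen_Ioo.uniqueDiffOn
    rw [iteratedDerivWithin_succ']
    have heq : Set.EqOn (derivWithin (g h) S)
        (g (h+1) + fun x => ((h:ℝ) * (h:ℝ)) * g (h-1) x) S := by
      intro x hx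
      have := ((g_hasDeriv h x (cos_ne hx)).hasDerivWithinAt).derivWithin (hU x hx)
      rw [this]
      rfl
    rw [iteratedDerivWithin_congr heq zero_mem_S]
    rw [iteratedDerivWithin_add zero_mem_S hU ((contg (h+1) m).contDiffWithinAt zero_mem_S)
      ((contDiffOn_const.mul (contg (h-1) m)).contDiffWithinAt zero_mem_S)]
    rw [iteratedDerivWithin_const_mul zero_mem_S hU _ ((contg (h-1) m).contDiffWithinAt zero_mem_S)]
    rw [IH (h+1), IH (h-1)]
    show ((W m (h+1) : ℝ)) + (h:ℝ) * (h:ℝ) * (W m (h-1) : ℝ) = ((W (m+1) h : ℝ))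
    have : W (m+1) h = W m (h+1) + h * h * W m (h-1) := rfl
    rw [this]
    push_cast
    ring

lemma iterg' (m : ℕ) : iteratedDeriv m (fun x => 1 / Real.cos x) 0 = W m 0 := by
  have hfun : (fun x : ℝ => 1 / Real.cos x) = g 0 := by
    funext x; simp [g]
  rw [hfun, iteratedDeriv_eq_iteratedFDeriv,
    ← iteratedFDerivWithin_of_isOpen (𝕜 := ℝ) (f := g 0) m isOpen_Ioo zero_mem_S,
    ← iteratedDerivWithin_eq_iteratedFDerivWithin]
  exact iterg m 0



lemma E_extract (E : ℕ → ℝ)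
    (hE : ∀ x : ℝ, |x| < π / 2 →
      HasSum (fun n : ℕ => E n * x ^ (2 * n) / ((2 * n).factorial : ℝ)) (1 / Real.cos x))
    (n : ℕ) :
    E n = iteratedDeriv (2*n) (fun x : ℝ => 1/Real.cos x) 0 := by
  classical
  set c : ℕ → ℝ := fun k => if Even k then E (k/2) / (k.factorial : ℝ) else 0 with hc
  set p := FormalMultilinearSeries.ofScalars ℝ c with hp
  have hpi := Real.pi_gt_three
  -- HasSum on the unit ball
  have hsum : ∀ y : ℝ, |y| < 1 → HasSum (fun k => c k * y ^ k) (1 / Real.cos y) := by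
    intro y hy
    have h1 := hE y (by linarith)
    have hinj : Function.Injective (fun j : ℕ => 2*j) := fun a b hab => by
      dsimp only at hab; omega
    have hvan : ∀ k ∉ Set.range (fun j : ℕ => 2*j), c k * y ^ k = 0 := by
      intro k hk
      have : ¬ Even k := by
        intro ⟨t, ht⟩
        exact hk ⟨t, by dsimp only; omega⟩
      simp [hc, this]
    refine (Function.Injective.hasSum_iff hinj hvan).mp ?_
    convert h1 using 1
    funext j
    have hev : Even (2*j) := ⟨j, by omega⟩
    have hdiv : (2*j)/2 = j := by omega
    simp only [Function.comp_apply, hc, hev, if_pos, hdiv]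
    ring
  -- bound for the radius
  have h32 : |(1.5 : ℝ)| < π/2 := by rw [abs_of_pos] <;> [linarith; norm_num]
  have hsummable := (hE 1.5 h32).summable
  have htend := hsummable.tendsto_atTop_zero
  have habs : Filter.Tendsto (fun j => |E j * (1.5:ℝ) ^ (2*j) / ((2*j).factorial : ℝ)|)
      Filter.atTop (nhds |0|) := htend.abs
  have hbdd := habs.bddAbove_range
  obtain ⟨C, hC⟩ := hbdd
  rw [mem_upperBounds] at hC
  have hC0 : 0 ≤ C := le_trans (abs_nonneg _) (hC _ ⟨0, rfl⟩)
  have hrad : (1 : ENNReal) ≤ p.radius := by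
    have hb : ∀ k : ℕ, ‖p k‖ * (1:ℝ) ^ k ≤ C := by
      intro k
      rw [one_pow, mul_one, hp, FormalMultilinearSeries.ofScalars_norm]
      by_cases hev : Even k
      · obtain ⟨j, rfl⟩ : ∃ j, k = 2*j := by
          obtain ⟨t, ht⟩ := hev; exact ⟨t, by omega⟩
        have hdiv : (2*j)/2 = j := by omega
        have hceq : c (2*j) = E j / ((2*j).factorial : ℝ) := by
          simp only [hc]
          rw [if_pos hev, hdiv]
        rw [hceq, Real.norm_eq_abs]
        calc |E j / ((2*j).factorial : ℝ)|
            ≤ |E j * (1.5:ℝ)^(2*j) / ((2*j).factorial : ℝ)| := by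
              rw [abs_div, abs_div, abs_mul]
              have hfp : (0:ℝ) < |((2*j).factorial : ℝ)| := by positivity
              apply (div_le_div_iff_of_pos_right hfp).mpr
              apply le_mul_of_one_le_right (abs_nonneg _)
              rw [abs_pow, abs_of_pos (by norm_num : (0:ℝ) < 1.5)]
              exact one_le_pow₀ (by norm_num)
          _ ≤ C := hC _ ⟨j, rfl⟩
      · simp only [hc, if_neg hev]
        simpa using hC0
    have := p.le_radius_of_bound C (r := 1) hb
    simpa using this
  -- the power series
  have hps : HasFPowerSeriesOnBall (fun x : ℝ => 1/Real.cos x) p 0 1 :=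
    { r_le := hrad
      r_pos := by norm_num
      hasSum := by
        intro y hy
        have hy' : |y| < 1 := by
          rw [EMetric.mem_ball, edist_zero_right, enorm_eq_nnnorm] at hy
          have h2 : ‖y‖₊ < 1 := by exact_mod_cast hy
          have h3 : ‖y‖ < 1 := by exact_mod_cast h2
          simpa [Real.norm_eq_abs] using h3
        have := hsum y hy'
        simp only [zero_add, hp, FormalMultilinearSeries.ofScalars_apply_eq, smul_eq_mul]
        exact this }
  have key := hps.factorial_smul (y := (1:ℝ)) (2*n)
  rw [iteratedDeriv_eq_iteratedFDeriv]
  rw [← key, hp, FormalMultilinearSeries.ofScalars_apply_eq]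
  have hceq : c (2*n) = E n / ((2*n).factorial : ℝ) := by
    simp only [hc]
    rw [if_pos (even_two_mul n), (by omega : (2*n)/2 = n)]
  rw [hceq, one_pow, smul_eq_mul, mul_one, nsmul_eq_mul]
  rw [mul_div_cancel₀]
  · exact Nat.cast_ne_zero.mpr (Nat.factorial_ne_zero _)



end DiagPP

/-- The number of diagonal pair partitions of `[2n] ⊔ [2̄n]` equals the Euler number
`E_{2n}` (defined by `sec x = ∑ E_{2n} x^{2n}/(2n)!`).  A diagonal pair partition is
encoded as a pair `(f, g)` of fixed-point-free involutions of `Fin (2n)` (each pair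
partition being the orbit partition of such an involution) such that `a` is the
smaller element of its pair in `f` if and only if `a` is the smaller element of its
pair in `g`, i.e. the blocks of the two pair partitions, ordered by their minimal
elements, have the same minima. -/
theorem card_diagonal_pair_partitions_eq_euler (E : ℕ → ℝ)
    (hE : ∀ x : ℝ, |x| < π / 2 →
      HasSum (fun n : ℕ => E n * x ^ (2 * n) / ((2 * n).factorial : ℝ)) (1 / Real.cos x))
    (n : ℕ) :
    (Nat.card {p : Equiv.Perm (Fin (2 * n)) × Equiv.Perm (Fin (2 * n)) //
        (∀ a, p.1 (p.1 a) = a) ∧ (∀ a, p.1 a ≠ a) ∧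
        (∀ a, p.2 (p.2 a) = a) ∧ (∀ a, p.2 a ≠ a) ∧
        (∀ a, a < p.1 a ↔ a < p.2 a)} : ℝ) = E n := by
  rw [DiagPP.card_final n, DiagPP.E_extract E hE n, ← DiagPP.iterg' (2*n)]
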